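/- For integers j, k, d with 0 ≤ j ≤ k-1 ≤ d, we have Σ_{ℓ=j}^{k-1} (-1)^{ℓ+1-j} C(d-ℓ, k-ℓ) C(d-j, ℓ-j) = (-1)^{k-j} C(d-j, k-j). -/

import Mathlib

open Finset

lemma choose_mul_aux (D n m : ℕ) (hm : m ≤ n) :
    D.choose m * (D - m).choose (n - m) = D.choose n * n.choose m := by
  rcases le_or_gt n D with h | h
  · exact (Nat.choose_mul hm).symm
  · rw [Nat.choose_eq_zero_of_lt h, zero_mul]
    rcases le_or_gt m D with hm' | hm'
    · rw [Nat.choose_eq_zero_of_lt (show D - m < n - m by omega), mul_zero]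
    · rw [Nat.choose_eq_zero_of_lt hm', zero_mul]

/-- For `0 ≤ j ≤ k-1 ≤ d`:
`∑_{ℓ=j}^{k-1} (-1)^{ℓ+1-j} C(d-ℓ, k-ℓ) C(d-j, ℓ-j) = (-1)^{k-j} C(d-j, k-j)`. -/
theorem stmt_2 (j k d : ℕ) (hjk : j ≤ k - 1) (hkd : k - 1 ≤ d) (hk : 1 ≤ k) :
    ∑ ℓ ∈ Finset.Icc j (k - 1),
      (-1 : ℤ) ^ (ℓ + 1 - j) * ((d - ℓ).choose (k - ℓ) : ℤ) * ((d - j).choose (ℓ - j) : ℤ)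
      = (-1 : ℤ) ^ (k - j) * ((d - j).choose (k - j) : ℤ) := by
  obtain ⟨n, hn⟩ : ∃ n, k = j + n := ⟨k - j, by omega⟩
  obtain ⟨D, hD⟩ : ∃ D, d = j + D := ⟨d - j, by omega⟩
  subst hn hD
  have hn1 : 1 ≤ n := by omega
  rw [← Finset.Ico_add_one_right_eq_Icc, show j + n - 1 + 1 = j + n by omega,
    Finset.sum_Ico_eq_sum_range, show j + n - j = n by omega]
  have hterm : ∀ m ∈ Finset.range n,
      (-1 : ℤ) ^ (j + m + 1 - j) * ((j + D - (j + m)).choose (j + n - (j + m)) : ℤ)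
        * ((j + D - j).choose (j + m - j) : ℤ)
      = (D.choose n : ℤ) * ((n.choose m : ℤ) * (-1) ^ (m + 1)) := by
    intro m hm
    rw [Finset.mem_range] at hm
    have h1 : j + m + 1 - j = m + 1 := by omega
    have h2 : j + D - (j + m) = D - m := by omega
    have h3 : j + n - (j + m) = n - m := by omega
    have h4 : j + D - j = D := by omega
    have h5 : j + m - j = m := by omega
    rw [h1, h2, h3, h4, h5]
    have := choose_mul_aux D n m (by omega)
    have : ((D.choose m : ℤ) * (D - m).choose (n - m)) = (D.choose n : ℤ) * n.choose m := by
      exact_mod_cast congrArg (Nat.cast : ℕ → ℤ) this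
    rw [mul_assoc, mul_comm (((D - m).choose (n - m) : ℤ)), this]
    ring
  rw [Finset.sum_congr rfl hterm, ← Finset.mul_sum]
  have hsum : ∑ m ∈ Finset.range n, (n.choose m : ℤ) * (-1) ^ (m + 1) = (-1) ^ n := by
    have h := Int.alternating_sum_range_choose_of_ne (n := n) (by omega)
    rw [Finset.sum_range_succ, Nat.choose_self] at h
    have h2 : ∑ m ∈ Finset.range n, (n.choose m : ℤ) * (-1) ^ (m + 1)
        = -∑ m ∈ Finset.range n, (-1 : ℤ) ^ m * (n.choose m : ℤ) := by
      rw [← Finset.sum_neg_distrib]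
      exact Finset.sum_congr rfl fun m _ => by ring
    rw [h2]
    push_cast at h
    linarith
  rw [hsum]
  rw [show j + D - j = D by omega]
  ring
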